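/- For every positive integer n, the sequence \{1/(n-k)!\}_{k \ge 0} (interpreted as 0 when k > n) is a multiplier sequence; that is, for every real polynomial \sum_{k=0}^m a_k x^k with only real zeros, the polynomial \sum_{k=0}^m \frac{a_k}{(n-k)!} x^k is either identically zero or has only real zeros. -/

import Mathlib

open Polynomial Finset

/-- Rolle-type counting: roots of `f' - r f` interleave / absorb multiplicities. -/
lemma roots_card_le_lin (f : ℝ[X]) (r : ℝ) (hf : f ≠ 0)
    (hg : derivative f - C r * f ≠ 0) :
    Multiset.card f.roots ≤ Multiset.card (derivative f - C r * f).roots + 1 := by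
  set g : ℝ[X] := derivative f - C r * f with hgdef
  have hA : f.roots.toFinset.card ≤ (g.roots.toFinset \ f.roots.toFinset).card + 1 := by
    refine Finset.card_le_diff_of_interleaved fun x hx y hy hxy _ => ?_
    rw [Multiset.mem_toFinset, mem_roots hf] at hx hy
    have hc : ContinuousOn (fun t : ℝ => Real.exp (-r * t) * f.eval t) (Set.Icc x y) :=
      (((Real.continuous_exp.comp (continuous_const.mul continuous_id)).mul
        f.continuous_aeval)).continuousOn
    have hd : ∀ t ∈ Set.Ioo x y, HasDerivAt (fun t : ℝ => Real.exp (-r * t) * f.eval t)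
        (Real.exp (-r * t) * g.eval t) t := by
      intro t _
      have h1 : HasDerivAt (fun t : ℝ => Real.exp (-r * t)) (Real.exp (-r * t) * -r) t := by
        simpa [Function.comp_def, neg_mul] using (Real.hasDerivAt_exp (-r * t)).comp t
          ((hasDerivAt_id t).const_mul (-r))
      have h2 := h1.mul (f.hasDerivAt t)
      refine h2.congr_deriv ?_
      simp [hgdef, eval_sub, eval_mul]
      ring
    obtain ⟨z, hz1, hz2⟩ := exists_hasDerivAt_eq_zero hxy hc (by simp [hx.eq_zero, hy.eq_zero]) hd
    refine ⟨z, ?_, hz1.1, hz1.2⟩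
    have hgz : g.eval z = 0 := by
      rcases mul_eq_zero.1 hz2 with h' | h'
      · exact absurd h' (Real.exp_ne_zero _)
      · exact h'
    rw [Multiset.mem_toFinset, mem_roots hg]
    exact hgz
  have hB : ∀ x : ℝ, f.rootMultiplicity x - 1 ≤ g.rootMultiplicity x := by
    intro x
    rcases Nat.eq_zero_or_pos (f.rootMultiplicity x - 1) with h0 | hpos
    · omega
    have hdvd : (X - C x) ^ (f.rootMultiplicity x - 1) ∣ g := by
      have h1 : (X - C x) ^ (f.rootMultiplicity x - 1) ∣ derivative f :=
        dvd_trans (pow_dvd_pow _ (rootMultiplicity_sub_one_le_derivative_rootMultiplicity f x))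
          (pow_rootMultiplicity_dvd _ _)
      have h2 : (X - C x) ^ (f.rootMultiplicity x - 1) ∣ f :=
        dvd_trans (pow_dvd_pow _ (Nat.sub_le _ _)) (pow_rootMultiplicity_dvd _ _)
      exact dvd_sub h1 (h2.mul_left _)
    exact (le_rootMultiplicity_iff hg).2 hdvd
  calc
    Multiset.card f.roots = ∑ x ∈ f.roots.toFinset, f.roots.count x :=
      (Multiset.toFinset_sum_count_eq _).symm
    _ = ∑ x ∈ f.roots.toFinset, (f.roots.count x - 1 + 1) :=
      (Eq.symm <| Finset.sum_congr rfl fun _ hx => tsub_add_cancel_of_le <|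
        Nat.succ_le_iff.2 <| Multiset.count_pos.2 <| Multiset.mem_toFinset.1 hx)
    _ = (∑ x ∈ f.roots.toFinset, (f.rootMultiplicity x - 1)) + f.roots.toFinset.card := by
      simp only [Finset.sum_add_distrib, Finset.card_eq_sum_ones, count_roots]
    _ ≤ (∑ x ∈ f.roots.toFinset, g.rootMultiplicity x) +
          ((g.roots.toFinset \ f.roots.toFinset).card + 1) :=
      add_le_add (Finset.sum_le_sum fun x _ => hB x) hA
    _ ≤ (∑ x ∈ f.roots.toFinset, g.roots.count x) +
          ((∑ x ∈ g.roots.toFinset \ f.roots.toFinset, g.roots.count x) + 1) := by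
      simp only [← count_roots]
      refine add_le_add_right (add_le_add_left ((Finset.card_eq_sum_ones _).trans_le ?_) _) _
      refine Finset.sum_le_sum fun x hx => Nat.succ_le_iff.2 <| ?_
      rw [Multiset.count_pos, ← Multiset.mem_toFinset]
      exact (Finset.mem_sdiff.1 hx).1
    _ = Multiset.card g.roots + 1 := by
      rw [← add_assoc, ← Finset.sum_union Finset.disjoint_sdiff, Finset.union_sdiff_self_eq_union,
        ← Multiset.toFinset_sum_count_eq, ← Finset.sum_subset Finset.subset_union_right]
      intro x _ hx₂
      simpa only [Multiset.mem_toFinset, Multiset.count_eq_zero] using hx₂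

/-- A nonzero real polynomial with at least `natDegree - 1` real roots splits. -/
lemma splits_of_card_roots_ge {p : ℝ[X]} (hp : p ≠ 0)
    (h : p.natDegree ≤ Multiset.card p.roots + 1) : p.Splits := by
  rw [splits_iff_card_roots]
  obtain ⟨q, hq1, hq2, hq3⟩ := p.exists_prod_multiset_X_sub_C_mul
  have hqne : q ≠ 0 := by
    rintro rfl
    rw [mul_zero] at hq1
    exact hp hq1.symm
  rcases Nat.lt_or_ge q.natDegree 1 with h0 | h1
  · omega
  exfalso
  have hq1' : q.natDegree = 1 := by omega
  have hc1 : q.coeff 1 ≠ 0 := by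
    have : q.coeff 1 = q.leadingCoeff := by rw [leadingCoeff, hq1']
    rw [this]
    exact leadingCoeff_ne_zero.2 hqne
  have hroot : q.IsRoot (-(q.coeff 0) / q.coeff 1) := by
    have hq : q = C (q.coeff 1) * X + C (q.coeff 0) :=
      eq_X_add_C_of_natDegree_le_one hq1'.le
    rw [IsRoot, hq]
    simp only [coeff_add, coeff_C_mul, coeff_X_one, coeff_X_zero, coeff_C_zero, coeff_C_succ, mul_one, mul_zero, add_zero, zero_add, eval_add, eval_mul, eval_C, eval_X]
    field_simp
    ring
  have := (mem_roots hqne).2 hroot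
  rw [hq3] at this
  simp at this

lemma splits_step {f : ℝ[X]} (hf : f.Splits) (r : ℝ) :
    (derivative f - C r * f).Splits := by
  rcases eq_or_ne (derivative f - C r * f) 0 with hg | hg
  · rw [hg]; exact Splits.zero
  have hf0 : f ≠ 0 := by rintro rfl; simp at hg
  have hcard := roots_card_le_lin f r hf0 hg
  have hdeg : (derivative f - C r * f).natDegree ≤ f.natDegree := by
    refine le_trans (natDegree_sub_le _ _) (max_le ?_ (natDegree_C_mul_le _ _))
    exact le_trans (natDegree_derivative_le f) (Nat.sub_le _ _)
  have hfc : Multiset.card f.roots = f.natDegree := splits_iff_card_roots.1 hf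
  exact splits_of_card_roots_ge hg (by omega)


noncomputable def applyList : List ℝ → ℝ[X] → ℝ[X]
  | [], f => f
  | r :: l, f => derivative (applyList l f) - C r * applyList l f


lemma applyList_splits (l : List ℝ) {f : ℝ[X]} (hf : f.Splits) :
    (applyList l f).Splits := by
  induction l with
  | nil => exact hf
  | cons r l ih => exact splits_step ih r

noncomputable def Dop : Module.End ℝ (Polynomial ℝ) := Polynomial.derivative

lemma aeval_Dop_list (l : List ℝ) (f : ℝ[X]) :
    (aeval Dop ((l.map fun r => X - C r).prod)) f = applyList l f := by
  induction l with
  | nil => simp [applyList]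
  | cons r l ih =>
    rw [List.map_cons, List.prod_cons, map_mul, Module.End.mul_apply, ih]
    rw [map_sub, aeval_X, aeval_C]
    rw [LinearMap.sub_apply, Module.algebraMap_end_apply, smul_eq_C_mul]
    rfl

lemma im_eq_zero_of_splits {p : ℝ[X]} (hp : p.Splits) (hp0 : p ≠ 0)
    {z : ℂ} (hz : aeval z p = 0) : z.im = 0 := by
  have hpe := hp.eq_prod_roots
  rw [hpe] at hz
  rw [map_mul, aeval_C, map_multiset_prod] at hz
  rcases mul_eq_zero.1 hz with h' | h'
  · exact absurd h' (by
      simpa using (leadingCoeff_ne_zero.2 hp0))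
  · rw [Multiset.prod_eq_zero_iff] at h'
    obtain ⟨w, hw, hw0⟩ := Multiset.mem_map.1 h'
    obtain ⟨c, hc, rfl⟩ := Multiset.mem_map.1 hw
    rw [map_sub, aeval_X, aeval_C] at hw0
    have : z = (c : ℂ) := by
      have := sub_eq_zero.1 hw0
      simpa using this
    rw [this]
    simp

lemma splits_of_im {p : ℝ[X]} (hp : ∀ z : ℂ, aeval z p = 0 → z.im = 0) :
    p.Splits := by
  refine Splits.of_splits_map (algebraMap ℝ ℂ) (IsAlgClosed.splits _) ?_
  intro z hz
  have hz' : aeval z p = 0 := by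
    have := (mem_roots'.1 hz).2
    rwa [IsRoot, eval_map, ← aeval_def] at this
  have him := hp z hz'
  exact ⟨z.re, by rw [← Complex.re_add_im z, him]; simp⟩



theorem stmt_4 (n : ℕ) (hn : 0 < n) (m : ℕ) (a : ℕ → ℝ)
    (h : ∀ z : ℂ, aeval z (∑ k ∈ Finset.range (m + 1), C (a k) * X ^ k) = 0 → z.im = 0) :
    (∑ k ∈ Finset.range (m + 1),
        C ((if k ≤ n then (1 : ℝ) / (n - k).factorial else 0) * a k) * X ^ k) = 0 ∨
    ∀ z : ℂ, aeval z (∑ k ∈ Finset.range (m + 1),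
        C ((if k ≤ n then (1 : ℝ) / (n - k).factorial else 0) * a k) * X ^ k) = 0 → z.im = 0 := by
  set p : ℝ[X] := ∑ k ∈ Finset.range (m + 1), C (a k) * X ^ k with hp_def
  set t : ℝ[X] := ∑ k ∈ Finset.range (m + 1),
      C ((if k ≤ n then (1 : ℝ) / (n - k).factorial else 0) * a k) * X ^ k with ht_def
  by_cases ht : t = 0
  · exact Or.inl ht
  right
  -- p ≠ 0 (otherwise all coefficients vanish and t = 0)
  have hp0 : p ≠ 0 := by
    intro hp
    apply ht
    have hak : ∀ k ∈ Finset.range (m + 1), a k = 0 := by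
      intro k hk
      have hc := congrArg (fun q : ℝ[X] => q.coeff k) hp
      simp only [hp_def, finset_sum_coeff, coeff_C_mul, coeff_X_pow, coeff_zero,
        mul_ite, mul_one, mul_zero] at hc
      rwa [Finset.sum_ite_eq _ k (fun i => a i), if_pos hk] at hc
    refine Finset.sum_eq_zero fun k hk => ?_
    rw [hak k hk, mul_zero, map_zero, zero_mul]
  have hsplit : p.Splits := splits_of_im h
  set l : List ℝ := p.roots.toList with hl_def
  have hpeq : p = C p.leadingCoeff * ((l.map fun r => X - C r).prod) := by
    have h1 := hsplit.eq_prod_roots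
    have h2 : p.roots = (l : Multiset ℝ) := (Multiset.coe_toList _).symm
    rw [h2, Multiset.map_coe, Multiset.prod_coe] at h1
    exact h1
  set Q : ℝ[X] := (aeval Dop p) ((X : ℝ[X]) ^ n) with hQ_def
  have hQ1 : Q = C p.leadingCoeff * applyList l ((X : ℝ[X]) ^ n) := by
    rw [hQ_def]
    conv_lhs => rw [hpeq]
    rw [map_mul, aeval_C, Module.End.mul_apply, Module.algebraMap_end_apply,
      aeval_Dop_list, smul_eq_C_mul]
  have hQsplits : Q.Splits := by
    rw [hQ1]
    exact Splits.mul (Splits.C _) (applyList_splits l (Splits.X_pow n))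
  have hQ2 : Q = ∑ k ∈ Finset.range (m + 1),
      C (a k * (n.descFactorial k : ℝ)) * (X : ℝ[X]) ^ (n - k) := by
    rw [hQ_def, hp_def, map_sum, LinearMap.sum_apply]
    refine Finset.sum_congr rfl fun k _ => ?_
    have e1 : aeval Dop (C (a k) * X ^ k) =
        algebraMap ℝ (Module.End ℝ ℝ[X]) (a k) * Dop ^ k := by
      rw [map_mul, aeval_C, map_pow, aeval_X]
    rw [e1, Module.End.mul_apply, Module.algebraMap_end_apply, Module.End.pow_apply]
    show a k • derivative^[k] ((X : ℝ[X]) ^ n) = _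
    rw [iterate_derivative_X_pow_eq_smul, smul_smul, smul_eq_C_mul]
  -- the key evaluation identity
  have hid : ∀ z : ℂ, z ≠ 0 →
      (n.factorial : ℂ) * aeval z t = z ^ n * aeval z⁻¹ Q := by
    intro z hz0
    rw [hQ2, ht_def, map_sum, map_sum, Finset.mul_sum, Finset.mul_sum]
    refine Finset.sum_congr rfl fun k _ => ?_
    simp only [map_mul, map_pow, aeval_C, aeval_X]
    by_cases hk : k ≤ n
    · rw [if_pos hk]
      have h2 : ((n - k).factorial : ℂ) * (n.descFactorial k : ℂ) = (n.factorial : ℂ) := by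
        rw [← Nat.cast_mul, Nat.factorial_mul_descFactorial hk]
      have h3 : z ^ n = z ^ k * z ^ (n - k) := by
        rw [← pow_add, Nat.add_sub_cancel' hk]
      have h1 : ((n - k).factorial : ℂ) ≠ 0 := Nat.cast_ne_zero.2 (Nat.factorial_ne_zero _)
      have h4 : z ^ (n - k) ≠ 0 := pow_ne_zero _ hz0
      rw [h3, inv_pow]
      push_cast
      rw [← h2]
      field_simp
    · rw [if_neg hk, Nat.descFactorial_eq_zero_iff_lt.2 (lt_of_not_ge hk)]
      push_cast
      simp
  intro z hz
  by_cases hz0 : z = 0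
  · rw [hz0]; rfl
  have hid' := hid z hz0
  rw [hz, mul_zero] at hid'
  have hQz : aeval z⁻¹ Q = 0 := by
    rcases mul_eq_zero.1 hid'.symm with h' | h'
    · exact absurd h' (pow_ne_zero _ hz0)
    · exact h'
  by_cases hQ0 : Q = 0
  · -- then t ≡ 0 on ℝ \ {0}, so t = 0, contradiction
    exfalso
    apply ht
    apply Polynomial.eq_zero_of_infinite_isRoot
    refine Set.Infinite.mono ?_ ((Set.finite_singleton (0 : ℝ)).infinite_compl)
    intro x hx
    have hx0 : x ≠ 0 := hx
    have hxid := hid (x : ℂ) (Complex.ofReal_ne_zero.2 hx0)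
    rw [hQ0, map_zero, mul_zero] at hxid
    have hfac : ((n.factorial : ℂ)) ≠ 0 := Nat.cast_ne_zero.2 (Nat.factorial_ne_zero _)
    have haev : aeval ((x : ℝ) : ℂ) t = 0 := by
      rcases mul_eq_zero.1 hxid with h' | h'
      · exact absurd h' hfac
      · exact h'
    have : ((eval x t : ℝ) : ℂ) = 0 := by
      rw [← haev]
      rw [show ((x : ℝ) : ℂ) = algebraMap ℝ ℂ x from rfl, aeval_algebraMap_apply]
      simp
    exact Complex.ofReal_eq_zero.1 this
  have him : (z⁻¹).im = 0 := im_eq_zero_of_splits hQsplits hQ0 hQz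
  have hre : z⁻¹ = (((z⁻¹).re : ℝ) : ℂ) := Complex.ext rfl (by simp [him])
  calc z.im = ((z⁻¹)⁻¹).im := by rw [inv_inv]
    _ = 0 := by rw [hre, ← Complex.ofReal_inv, Complex.ofReal_im]
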